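/- Let F be a finite field with q elements and let m be a positive integer. Define ω : Matrix (Fin m) (Fin m) F → ℝ by ω(A) = 1 + (−1)^(r+1) · q^(r(r−1)/2) / ∏_{i=0}^{r−1} (q^m − q^i), where r = rank(A) (so that ω(0) = 0, the empty product being 1). Then ω is a normalized homogeneous weight on the matrix ring Matrix (Fin m) (Fin m) F. -/

import Mathlib

set_option linter.unusedSectionVars false
set_option maxHeartbeats 1000000

open LinearMap Finset Module

section Aux

variable {F : Type*} [Field F] [Fintype F]

local notation "q" => Fintype.card F

instance finite_submodule {U : Type*} [AddCommGroup U] [Module F U] [Finite U] :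
    Finite (Submodule F U) :=
  Finite.of_injective (fun K : Submodule F U => (K : Set U)) SetLike.coe_injective

attribute [local instance] Fintype.ofFinite

/-- An injective linear map corresponds to a linearly independent image of a basis. -/
lemma injective_iff_linearIndependent_comp {U W : Type*} [AddCommGroup U] [Module F U]
    [AddCommGroup W] [Module F W] {ι : Type*} [Fintype ι] (b : Basis ι F U)
    (f : U →ₗ[F] W) : Function.Injective f ↔ LinearIndependent F (f ∘ b) := by
  constructor
  · intro hf
    exact b.linearIndependent.map' f (LinearMap.ker_eq_bot.mpr hf)
  · intro h
    rw [← LinearMap.ker_eq_bot, Submodule.eq_bot_iff]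
    intro x hx
    have hx' : f x = 0 := hx
    have hsum : ∑ i, b.repr x i • (f ∘ b) i = 0 := by
      simp only [Function.comp_apply, ← map_smul, ← map_sum, b.sum_repr x, hx']
    have hz := Fintype.linearIndependent_iff.mp h (fun i => b.repr x i) hsum
    rw [← b.sum_repr x]
    simp [hz]

/-- Cardinality of injective linear maps into `Fin n → F`. -/
lemma card_injective_linearMaps {U : Type*} [AddCommGroup U] [Module F U]
    [FiniteDimensional F U] (n : ℕ) :
    Nat.card {f : U →ₗ[F] (Fin n → F) // Function.Injective f}
      = ∏ i ∈ range (finrank F U), (q ^ n - q ^ i) := by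
  classical
  by_cases hn : finrank F U ≤ n
  · let b : Basis (Fin (finrank F U)) F U := finBasis F U
    have e : {f : U →ₗ[F] (Fin n → F) // Function.Injective f} ≃
        {s : Fin (finrank F U) → (Fin n → F) // LinearIndependent F s} :=
      { toFun := fun f => ⟨f.1 ∘ b, (injective_iff_linearIndependent_comp b f.1).mp f.2⟩
        invFun := fun s => ⟨b.constr F s.1, by
          rw [injective_iff_linearIndependent_comp b]
          have : (b.constr F s.1) ∘ b = s.1 := by
            funext i; exact b.constr_basis F s.1 i
          rw [this]; exact s.2⟩
        left_inv := fun f => Subtype.ext (b.constr_self F f.1)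
        right_inv := fun s => Subtype.ext (by funext i; exact b.constr_basis F s.1 i) }
    have hfr : finrank F (Fin n → F) = n := by
      simp [Module.finrank_fintype_fun_eq_card]
    rw [Nat.card_congr e, card_linearIndependent (by rw [hfr]; exact hn)]
    rw [hfr]
    exact Fin.prod_univ_eq_prod_range (fun i => q ^ n - q ^ i) (finrank F U)
  · have hempty : IsEmpty {f : U →ₗ[F] (Fin n → F) // Function.Injective f} := by
      refine ⟨fun f => hn ?_⟩
      have := LinearMap.finrank_le_finrank_of_injective f.2
      simpa [Module.finrank_fintype_fun_eq_card] using this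
    rw [Nat.card_of_isEmpty]
    refine (Finset.prod_eq_zero (Finset.mem_range.mpr (not_le.mp hn)) ?_).symm
    simp

/-- Linear maps with a fixed kernel correspond to injective maps from the quotient. -/
lemma card_ker_eq {U W : Type*} [AddCommGroup U] [Module F U]
    [AddCommGroup W] [Module F W] (K : Submodule F U) :
    Nat.card {f : U →ₗ[F] W // ker f = K}
      = Nat.card {g : (U ⧸ K) →ₗ[F] W // Function.Injective g} := by
  refine Nat.card_congr
    { toFun := fun f => ⟨K.liftQ f.1 f.2.ge, ?_⟩
      invFun := fun g => ⟨g.1 ∘ₗ K.mkQ, ?_⟩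
      left_inv := ?_
      right_inv := ?_ }
  · rw [← LinearMap.ker_eq_bot]
    exact Submodule.ker_liftQ_eq_bot' K f.1 f.2.symm
  · rw [LinearMap.ker_comp, LinearMap.ker_eq_bot.mpr g.2, Submodule.comap_bot,
      Submodule.ker_mkQ]
  · intro f
    exact Subtype.ext (Submodule.liftQ_mkQ K f.1 f.2.ge)
  · intro g
    refine Subtype.ext (Submodule.linearMap_qext K ?_)
    exact Submodule.liftQ_mkQ K (g.1 ∘ₗ K.mkQ) _

lemma card_ker_eq' {U : Type*} [AddCommGroup U] [Module F U] [FiniteDimensional F U]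
    (K : Submodule F U) (n : ℕ) :
    Nat.card {f : U →ₗ[F] (Fin n → F) // ker f = K}
      = ∏ i ∈ range (finrank F (U ⧸ K)), (q ^ n - q ^ i) := by
  rw [card_ker_eq, card_injective_linearMaps]

/-- The counting identity: linear maps `U →ₗ Fⁿ` partitioned by kernel. -/
lemma counting_identity {U : Type*} [AddCommGroup U] [Module F U] [Finite U]
    (n : ℕ) :
    ∑ K : Submodule F U, ∏ i ∈ range (finrank F (U ⧸ K)), (q ^ n - q ^ i)
      = q ^ (n * finrank F U) := by
  classical
  haveI : Module.Finite F U := Module.Finite.of_finite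
  haveI : Finite (U →ₗ[F] (Fin n → F)) :=
    Finite.of_injective _ (DFunLike.coe_injective (F := U →ₗ[F] (Fin n → F)))
  have h1 : ∀ K : Submodule F U,
      ∏ i ∈ range (finrank F (U ⧸ K)), (q ^ n - q ^ i)
        = Fintype.card {f : U →ₗ[F] (Fin n → F) // ker f = K} := by
    intro K
    have h := (card_ker_eq' K n).symm
    rwa [Nat.card_eq_fintype_card] at h
  rw [Finset.sum_congr rfl fun K _ => h1 K, ← Fintype.card_sigma,
    Fintype.card_congr (Equiv.sigmaFiberEquiv (fun f : U →ₗ[F] (Fin n → F) => ker f)),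
    Fintype.card_congr ((finBasis F U).constr F (M' := Fin n → F)).toEquiv.symm]
  simp only [Fintype.card_fun, Fintype.card_fin, ← pow_mul]

lemma cast_prod_sub (n s : ℕ) :
    ((∏ i ∈ range s, (q ^ n - q ^ i) : ℕ) : ℝ)
      = ∏ i ∈ range s, ((q : ℝ) ^ n - (q : ℝ) ^ i) := by
  have hq1 : 1 ≤ q := Fintype.card_pos
  by_cases hs : s ≤ n
  · rw [Nat.cast_prod]
    refine Finset.prod_congr rfl fun i hi => ?_
    have hle : q ^ i ≤ q ^ n :=
      Nat.pow_le_pow_right hq1 (le_trans (le_of_lt (Finset.mem_range.mp hi)) hs)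
    push_cast [Nat.cast_sub hle]
    ring
  · have hn : n ∈ range s := Finset.mem_range.mpr (not_le.mp hs)
    rw [Finset.prod_eq_zero hn (by simp), Finset.prod_eq_zero hn (by ring)]
    simp

/-- The key Möbius-type identity over the lattice of submodules. -/
lemma mobius_identity {U : Type*} [AddCommGroup U] [Module F U] [Finite U]
    [Nontrivial U] :
    ∑ K : Submodule F U, (-1 : ℝ) ^ (finrank F (U ⧸ K))
        * (q : ℝ) ^ (finrank F (U ⧸ K) * (finrank F (U ⧸ K) - 1) / 2) = 0 := by
  classical
  have hq2 : 2 ≤ q := Fintype.one_lt_card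
  haveI : Module.Finite F U := Module.Finite.of_finite
  set d := finrank F U with hd
  have hd1 : 0 < d := finrank_pos
  set c : Submodule F U → ℕ := fun K => finrank F (U ⧸ K) with hc
  set P : Polynomial ℝ :=
    (∑ K : Submodule F U, ∏ i ∈ range (c K), (Polynomial.X - Polynomial.C ((q : ℝ) ^ i)))
      - Polynomial.X ^ d with hP
  have hroot : ∀ n : ℕ, P.IsRoot ((q : ℝ) ^ n) := by
    intro n
    have hcount := congrArg (Nat.cast (R := ℝ)) (counting_identity (F := F) (U := U) n)
    rw [Nat.cast_sum] at hcount
    simp only [cast_prod_sub] at hcount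
    simp only [Polynomial.IsRoot, hP, Polynomial.eval_sub, Polynomial.eval_pow,
      Polynomial.eval_X, Polynomial.eval_finset_sum, Polynomial.eval_prod, Polynomial.eval_C]
    rw [sub_eq_zero, hcount]
    push_cast
    rw [pow_mul]
  have hPzero : P = 0 := by
    apply Polynomial.eq_zero_of_infinite_isRoot
    apply Set.infinite_of_injective_forall_mem (f := fun n : ℕ => ((q : ℝ) ^ n))
    · intro a b hab
      have h2 : ((q ^ a : ℕ) : ℝ) = ((q ^ b : ℕ) : ℝ) := by push_cast; exact hab
      exact Nat.pow_right_injective hq2 (Nat.cast_injective h2)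
    · exact hroot
  have heval := congrArg (Polynomial.eval 0) hPzero
  simp only [hP, Polynomial.eval_sub, Polynomial.eval_finset_sum, Polynomial.eval_prod,
    Polynomial.eval_pow, Polynomial.eval_X, Polynomial.eval_C, Polynomial.eval_zero,
    zero_sub, zero_pow hd1.ne', sub_zero] at heval
  rw [← heval]
  refine Finset.sum_congr rfl fun K _ => Eq.symm ?_
  calc ∏ i ∈ range (c K), (-(q : ℝ) ^ i)
      = ∏ i ∈ range (c K), ((-1) * (q : ℝ) ^ i) := by
        exact Finset.prod_congr rfl fun i _ => by ring
    _ = (-1 : ℝ) ^ (c K) * ∏ i ∈ range (c K), (q : ℝ) ^ i := by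
        rw [Finset.prod_mul_distrib, Finset.prod_const, Finset.card_range]
    _ = (-1 : ℝ) ^ (c K) * (q : ℝ) ^ (c K * (c K - 1) / 2) := by
        rw [Finset.prod_pow_eq_pow_sum, Finset.sum_range_id]

end Aux

/-- The principal left ideal generated by `x`, as a set: `{r * x : r ∈ R}`. -/
def leftOrbit {R : Type*} [Ring R] (x : R) : Set R := {z | ∃ r : R, z = r * x}

/-- `ω` is a normalized homogeneous weight on the finite ring `R`. -/
def IsNormHomWeight {R : Type*} [Ring R] [Finite R] (ω : R → ℝ) : Prop :=
  ω 0 = 0 ∧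
  (∀ x y : R, leftOrbit x = leftOrbit y → ω x = ω y) ∧
  (∀ x : R, x ≠ 0 →
    ∑ y ∈ (Set.toFinite (leftOrbit x)).toFinset, ω y
      = ((Set.toFinite (leftOrbit x)).toFinset.card : ℝ))

section MatrixPart

variable {F : Type*} [Field F] [Fintype F]

lemma mem_leftOrbit_iff {m : ℕ} (x B : Matrix (Fin m) (Fin m) F) :
    B ∈ leftOrbit x ↔ ker x.mulVecLin ≤ ker B.mulVecLin := by
  constructor
  · rintro ⟨M, rfl⟩
    rw [Matrix.mulVecLin_mul]
    exact LinearMap.ker_le_ker_comp _ _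
  · intro hle
    obtain ⟨g, hg⟩ := LinearMap.exists_extend
      (((ker x.mulVecLin).liftQ B.mulVecLin hle) ∘ₗ
        (x.mulVecLin.quotKerEquivRange.symm : LinearMap.range x.mulVecLin →ₗ[F] _))
    have hinj : Function.Injective
        (Matrix.mulVecLin : Matrix (Fin m) (Fin m) F → _) := by
      intro A A' hA
      have h2 := congrArg LinearMap.toMatrix' hA
      rwa [← Matrix.toLin'_apply', ← Matrix.toLin'_apply', LinearMap.toMatrix'_toLin',
        LinearMap.toMatrix'_toLin'] at h2
    refine ⟨LinearMap.toMatrix' g, hinj ?_⟩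
    rw [Matrix.mulVecLin_mul,
      show (LinearMap.toMatrix' g).mulVecLin = g from by
        rw [← Matrix.toLin'_apply', Matrix.toLin'_toMatrix']]
    refine LinearMap.ext fun v => ?_
    have h3 := LinearMap.congr_fun hg ⟨x.mulVecLin v, LinearMap.mem_range_self _ v⟩
    simp only [LinearMap.comp_apply, Submodule.subtype_apply, LinearEquiv.coe_coe] at h3
    rw [LinearMap.quotKerEquivRange_symm_apply_image, Submodule.mkQ_apply,
      Submodule.liftQ_apply] at h3
    simpa using h3.symm

lemma rank_eq_finrank_quot {m : ℕ} (x : Matrix (Fin m) (Fin m) F) :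
    x.rank = finrank F ((Fin m → F) ⧸ ker x.mulVecLin) := by
  rw [Matrix.rank]
  exact (LinearEquiv.finrank_eq x.mulVecLin.quotKerEquivRange).symm

attribute [local instance] Fintype.ofFinite in
lemma mobius_above {V : Type*} [AddCommGroup V] [Module F V] [Finite V]
    (K : Submodule F V) (hK : Nontrivial (V ⧸ K)) :
    ∑ W : {W : Submodule F V // K ≤ W},
      (-1 : ℝ) ^ (finrank F (V ⧸ (W : Submodule F V)))
        * ((Fintype.card F : ℝ)) ^ (finrank F (V ⧸ (W : Submodule F V))
            * (finrank F (V ⧸ (W : Submodule F V)) - 1) / 2) = 0 := by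
  haveI : Finite (V ⧸ K) := Finite.of_surjective _ (Submodule.Quotient.mk_surjective K)
  have hr : ∀ W' : Submodule F (V ⧸ K),
      finrank F (V ⧸ (((Submodule.comapMkQRelIso K).toEquiv W' : {W : Submodule F V // K ≤ W})
        : Submodule F V)) = finrank F ((V ⧸ K) ⧸ W') := by
    intro W'
    have h1 : K ≤ Submodule.comap K.mkQ W' := fun v hv => by
      simp only [Submodule.mem_comap, Submodule.mkQ_apply]
      rw [(Submodule.Quotient.mk_eq_zero K).mpr hv]
      exact W'.zero_mem
    have h2 : (Submodule.comap K.mkQ W').map K.mkQ = W' :=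
      Submodule.map_comap_eq_self (by rw [Submodule.range_mkQ]; exact le_top)
    have e2 := Submodule.quotientQuotientEquivQuotient K (Submodule.comap K.mkQ W') h1
    exact (LinearEquiv.finrank_eq e2).symm.trans (by rw [h2])
  refine ((Fintype.sum_equiv (Submodule.comapMkQRelIso K).toEquiv
    (fun W' : Submodule F (V ⧸ K) =>
      (-1 : ℝ) ^ (finrank F ((V ⧸ K) ⧸ W'))
        * ((Fintype.card F : ℝ)) ^ (finrank F ((V ⧸ K) ⧸ W')
            * (finrank F ((V ⧸ K) ⧸ W') - 1) / 2))
    _ (fun W' => by rw [hr W'])).symm).trans (mobius_identity (U := V ⧸ K))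

end MatrixPart

theorem homogeneous_weight_matrix_ring
    {F : Type*} [Field F] [Fintype F] (q : ℕ) (hq : Fintype.card F = q)
    (m : ℕ) (hm : 0 < m)
    (ω : Matrix (Fin m) (Fin m) F → ℝ)
    (hω : ∀ A : Matrix (Fin m) (Fin m) F,
      ω A = 1 + (-1 : ℝ) ^ (A.rank + 1) * (q : ℝ) ^ (A.rank * (A.rank - 1) / 2)
              / ∏ i ∈ Finset.range A.rank, ((q : ℝ) ^ m - (q : ℝ) ^ i)) :
    IsNormHomWeight ω := by
  subst hq
  classical
  haveI : Fintype (Submodule F (Fin m → F)) := Fintype.ofFinite _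
  set q := Fintype.card F with hq
  have hq2 : 2 ≤ q := Fintype.one_lt_card
  have hmv : ∀ f : (Fin m → F) →ₗ[F] (Fin m → F), (LinearMap.toMatrix' f).mulVecLin = f :=
    fun f => by rw [← Matrix.toLin'_apply', Matrix.toLin'_toMatrix']
  refine ⟨?_, ?_, ?_⟩
  · rw [hω 0, Matrix.rank_zero]
    norm_num
  · intro x y hxy
    have hx : x ∈ leftOrbit y := by rw [← hxy]; exact ⟨1, (one_mul x).symm⟩
    have hy : y ∈ leftOrbit x := by rw [hxy]; exact ⟨1, (one_mul y).symm⟩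
    obtain ⟨M, hM⟩ := hx
    obtain ⟨N, hN⟩ := hy
    have hr : x.rank = y.rank := le_antisymm
      (by rw [hM]; exact Matrix.rank_mul_le_right M y)
      (by rw [hN]; exact Matrix.rank_mul_le_right N x)
    rw [hω x, hω y, hr]
  · intro x hx
    set V := Fin m → F with hV
    set kx := ker x.mulVecLin with hkx
    set T := (Set.toFinite (leftOrbit x)).toFinset with hT
    have hmemT : ∀ y, y ∈ T ↔ kx ≤ ker y.mulVecLin := by
      intro y
      rw [hT, Set.Finite.mem_toFinset]
      exact mem_leftOrbit_iff x y
    -- the rank of x is positive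
    have hrankpos : 0 < finrank F (V ⧸ kx) := by
      rcases Nat.eq_zero_or_pos (finrank F (V ⧸ kx)) with h0 | h
      · exfalso
        apply hx
        haveI := Module.finrank_zero_iff (R := F) (M := V ⧸ kx) |>.mp h0
        have hker : kx = ⊤ := Submodule.Quotient.subsingleton_iff.mp this
        have hxz : x.mulVecLin = 0 := LinearMap.ker_eq_top.mp hker
        have := congrArg LinearMap.toMatrix' (congrArg Matrix.toLin'
          (rfl : x = x))
        calc x = LinearMap.toMatrix' (Matrix.toLin' x) := (LinearMap.toMatrix'_toLin' x).symm
          _ = LinearMap.toMatrix' x.mulVecLin := by rw [Matrix.toLin'_apply']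
          _ = 0 := by rw [hxz]; exact map_zero _
      · exact h
    haveI hnontriv : Nontrivial (V ⧸ kx) := by
      rw [← Module.finrank_pos_iff (R := F)]
      exact hrankpos
    -- split off the constant 1
    have hsplit : ∑ y ∈ T, ω y = (T.card : ℝ) + ∑ y ∈ T,
        ((-1 : ℝ) ^ (Matrix.rank y + 1) * (q : ℝ) ^ (Matrix.rank y * (Matrix.rank y - 1) / 2)
          / ∏ i ∈ Finset.range (Matrix.rank y), ((q : ℝ) ^ m - (q : ℝ) ^ i)) := by
      rw [Finset.sum_congr rfl (fun y _ => hω y), Finset.sum_add_distrib,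
        Finset.sum_const, nsmul_eq_mul, mul_one]
    rw [hsplit]
    set G : Submodule F V → ℝ := fun W =>
      (-1 : ℝ) ^ (finrank F (V ⧸ W) + 1) * (q : ℝ) ^ (finrank F (V ⧸ W) * (finrank F (V ⧸ W) - 1) / 2)
        / ∏ i ∈ Finset.range (finrank F (V ⧸ W)), ((q : ℝ) ^ m - (q : ℝ) ^ i) with hG
    have hzero : ∑ y ∈ T,
        ((-1 : ℝ) ^ (Matrix.rank y + 1) * (q : ℝ) ^ (Matrix.rank y * (Matrix.rank y - 1) / 2)
          / ∏ i ∈ Finset.range (Matrix.rank y), ((q : ℝ) ^ m - (q : ℝ) ^ i)) = 0 := by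
      have hGy : ∀ y ∈ T,
          ((-1 : ℝ) ^ (Matrix.rank y + 1) * (q : ℝ) ^ (Matrix.rank y * (Matrix.rank y - 1) / 2)
            / ∏ i ∈ Finset.range (Matrix.rank y), ((q : ℝ) ^ m - (q : ℝ) ^ i))
            = G (ker y.mulVecLin) := by
        intro y _
        rw [hG]
        simp only [rank_eq_finrank_quot y]
        rfl
      rw [Finset.sum_congr rfl hGy,
        ← Finset.sum_fiberwise' T (fun y => ker y.mulVecLin) G]
      -- fiber cardinalities
      have hfib : ∀ W : Submodule F V,
          (T.filter (fun y => ker y.mulVecLin = W)).card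
            = if kx ≤ W then ∏ i ∈ Finset.range (finrank F (V ⧸ W)), (q ^ m - q ^ i) else 0 := by
        intro W
        by_cases hle : kx ≤ W
        · rw [if_pos hle]
          have e : {y : Matrix (Fin m) (Fin m) F // y ∈ T.filter (fun y => ker y.mulVecLin = W)}
              ≃ {f : V →ₗ[F] V // ker f = W} :=
            { toFun := fun y => ⟨y.1.mulVecLin, (Finset.mem_filter.mp y.2).2⟩
              invFun := fun f => ⟨LinearMap.toMatrix' f.1, by
                refine Finset.mem_filter.mpr ⟨?_, ?_⟩
                · rw [hmemT, hmv, f.2]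
                  exact hle
                · rw [hmv, f.2]⟩
              left_inv := fun y => Subtype.ext (by
                show LinearMap.toMatrix' ((y : Matrix (Fin m) (Fin m) F).mulVecLin) = _
                rw [← Matrix.toLin'_apply', LinearMap.toMatrix'_toLin'])
              right_inv := fun f => Subtype.ext (hmv f.1) }
          rw [← Nat.card_eq_finsetCard, Nat.card_congr e, card_ker_eq' W m]
        · rw [if_neg hle]
          rw [Finset.card_eq_zero, Finset.filter_eq_empty_iff]
          intro y hy
          intro hker
          exact hle (hker ▸ (hmemT y).mp hy)
      -- rewrite the inner sums as cardinalities
      have hinner : ∀ W : Submodule F V,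
          (∑ y ∈ T.filter (fun y => ker y.mulVecLin = W), G W)
            = if kx ≤ W then
                ((∏ i ∈ Finset.range (finrank F (V ⧸ W)), (q ^ m - q ^ i) : ℕ) : ℝ) * G W
              else 0 := by
        intro W
        rw [Finset.sum_const, hfib W]
        split_ifs with h
        · rw [nsmul_eq_mul]
        · simp
      rw [Finset.sum_congr rfl fun W _ => hinner W, ← Finset.sum_filter]
      haveI : Fintype {W : Submodule F V // kx ≤ W} := Fintype.ofFinite _
      rw [Finset.sum_subtype (p := fun W => kx ≤ W) (Finset.univ.filter (fun W => kx ≤ W))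
        (by intro W; simp) (fun W => ((∏ i ∈ Finset.range (finrank F (V ⧸ W)), (q ^ m - q ^ i) : ℕ) : ℝ) * G W)]
      -- evaluate each term
      have hterm : ∀ W : {W : Submodule F V // kx ≤ W},
          ((∏ i ∈ Finset.range (finrank F (V ⧸ (W : Submodule F V))), (q ^ m - q ^ i) : ℕ) : ℝ)
              * G (W : Submodule F V)
            = -((-1 : ℝ) ^ (finrank F (V ⧸ (W : Submodule F V)))
              * (q : ℝ) ^ (finrank F (V ⧸ (W : Submodule F V))
                  * (finrank F (V ⧸ (W : Submodule F V)) - 1) / 2)) := by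
        intro W
        set c := finrank F (V ⧸ (W : Submodule F V)) with hc
        have hcm : c ≤ m := by
          have h1 : finrank F (V ⧸ (W : Submodule F V)) ≤ finrank F V :=
            Submodule.finrank_quotient_le _
          have h2 : finrank F V = m := by
            show finrank F (Fin m → F) = m
            simp [Module.finrank_fintype_fun_eq_card]
          rw [← hc] at h1
          exact h1.trans h2.le
        have hprodne : (∏ i ∈ Finset.range c, ((q : ℝ) ^ m - (q : ℝ) ^ i)) ≠ 0 := by
          rw [Finset.prod_ne_zero_iff]
          intro i hi
          have him : i < m := lt_of_lt_of_le (Finset.mem_range.mp hi) hcm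
          have hlt : (q : ℝ) ^ i < (q : ℝ) ^ m := by
            have : q ^ i < q ^ m := Nat.pow_lt_pow_right hq2 him
            exact_mod_cast this
          exact sub_ne_zero.mpr (ne_of_gt hlt)
        rw [cast_prod_sub, hG]
        simp only [← hq, ← hc]
        field_simp
        rw [pow_succ]
        ring
      rw [Finset.sum_congr rfl fun W _ => hterm W, Finset.sum_neg_distrib,
        mobius_above kx hnontriv, neg_zero]
    rw [hzero, add_zero]
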